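/- In the countermodel M = (L_s ∪ {†}), where L_s is the set of all languages over the one-letter alphabet {s} of P_n-letters and † is a fresh element, the operations defined in the paper satisfy the Kleene algebra least-fixpoint axiom: for all K, L, J in the carrier, K + L·J ≤ J implies L*·K ≤ J. -/
import Mathlib


open Computability

/-- Letters of synchronous strings: nonempty subsets of the alphabet `σ`. -/
def Letter (σ : Type*) := {A : Set σ // A.Nonempty}

/-- The carrier of the countermodel: synchronous languages over the one-letter
alphabet `{s}` (so letters are `P_n({s})`), together with a fresh element `†`
(represented by `none`). -/
abbrev CModel := Option (Language (Letter Unit))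

/-- Addition in the countermodel: `† ` if either argument is `†`, union otherwise. -/
def cAdd : CModel → CModel → CModel
  | some K, some L => some (K + L)
  | _, _ => none

open Classical in
/-- Multiplication in the countermodel: `∅` if either argument is `∅`,
otherwise `†` if either argument is `†`, otherwise elementwise concatenation. -/
noncomputable def cMul : CModel → CModel → CModel
  | some K, some L => some (K * L)
  | some K, none => if K = 0 then some 0 else none
  | none, some L => if L = 0 then some 0 else none
  | none, none => none

/-- Star in the countermodel: `†` on `†`, Kleene star otherwise. -/
def cStar : CModel → CModel
  | some K => some (K∗)
  | none => none

/-- The natural order: `K ≤ L` iff `K + L = L`. -/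
def cLe (K L : CModel) : Prop := cAdd K L = L

/-- The countermodel satisfies the least-fixpoint axiom of Kleene algebra:
`K + L·J ≤ J` implies `L∗·K ≤ J`. -/
theorem cModel_lfp (K L J : CModel) (h : cLe (cAdd K (cMul L J)) J) :
    cLe (cMul (cStar L) K) J := by
  unfold cLe at *
  match J with
  | none => cases cMul (cStar L) K <;> rfl
  | some j =>
    match K with
    | none =>
      exfalso
      cases hm : cMul none (cMul none (cMul L (some j))) <;>
        simp [cAdd, hm] at h
    | some k =>
      match L with
      | none =>
        by_cases hj : j = 0
        · subst hj
          simp only [cMul, if_pos rfl, cAdd, cStar] at h ⊢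
          simp at h
          subst h
          simp
        · simp only [cMul, if_neg hj, cAdd, cStar] at h
          exact absurd h (by simp)
      | some l =>
        simp only [cMul, cAdd, cStar, Option.some.injEq] at h ⊢
        have hkj : k + l * j + j = j := h
        have hk : k ≤ j := le_of_eq hkj |>.trans' <|
          (self_le_add_right k (l * j)).trans (self_le_add_right _ j)
        have hlj : l * j ≤ j := le_of_eq hkj |>.trans' <|
          (le_add_self).trans (self_le_add_right _ j)
        have : l∗ * k ≤ j := (mul_le_mul_right hk _).trans (kstar_mul_le_self hlj)
        rw [add_eq_sup]
        exact sup_eq_right.mpr this
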